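/- arXiv:2203.02630 — 2 statements merged into one kernel-verified Lean document; each statement's English description precedes it below -/
import Mathlib

section
/- Let A ∈ ℝ^{n×n}, B ∈ ℝ^{n×m}, H ≥ 1, and suppose P_H(A,B) = [A^{H−1}B, …, B] ∈ ℝ^{n×Hm} has full row rank n. Let C ∈ ℝ^{n×n} and D ∈ ℝ^{m×m} be symmetric positive definite, let 𝐂 = I_H ⊗ C and 𝐃 = I_H ⊗ D be their block-diagonal lifts, and define F = [𝐂·G_u(A,B); 𝐃]·(I − P_H(A,B)⁺·P_H(A,B)) ∈ ℝ^{(Hn+Hm)×Hm}, where the first factor stacks 𝐂·G_u(A,B) on top of 𝐃. Then ‖F⁺‖₂ ≤ 1/σ_min(D), where σ_min(D) is the smallest singular value of D. -/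
open Matrix
open scoped Matrix.Norms.L2Operator Kronecker

/-- `Xp` is the Moore–Penrose pseudoinverse of `X`: the four Penrose conditions. -/
def IsMoorePenrose {α β : Type*} [Fintype α] [Fintype β] [DecidableEq α] [DecidableEq β]
    (X : Matrix α β ℝ) (Xp : Matrix β α ℝ) : Prop :=
  X * Xp * X = X ∧ Xp * X * Xp = Xp ∧ (X * Xp)ᵀ = X * Xp ∧ (Xp * X)ᵀ = Xp * X

/-- The Euclidean norm of a finitely-indexed real vector. -/
noncomputable def evnorm {ι : Type*} [Fintype ι] (v : ι → ℝ) : ℝ :=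
  Real.sqrt (∑ i, v i ^ 2)

/-- The smallest singular value of a matrix, `σ_min(X) = inf_{‖z‖=1} ‖Xz‖` in Euclidean norms. -/
noncomputable def sigmaMin {α : Type*} [Fintype α] {q : ℕ} (X : Matrix α (Fin q) ℝ) : ℝ :=
  ⨅ z : { z : Fin q → ℝ // evnorm z = 1 }, evnorm (X.mulVec z)

/-- The block lower-triangular Toeplitz matrix `G_u(A,B) ∈ ℝ^{Hn×Hm}` whose `(i,j)` block
(for `j ≤ i`) is `A^{i−j}B` and whose blocks above the block diagonal are zero. -/
def Gu {n m : ℕ} (H : ℕ) (A : Matrix (Fin n) (Fin n) ℝ) (B : Matrix (Fin n) (Fin m) ℝ) :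
    Matrix (Fin H × Fin n) (Fin H × Fin m) ℝ :=
  Matrix.of fun p q =>
    if (q.1 : ℕ) ≤ (p.1 : ℕ) then (A ^ ((p.1 : ℕ) - (q.1 : ℕ)) * B) p.2 q.2 else 0

/-- The `H`-step controllability matrix `P_H(A,B) = [A^{H−1}B, …, B] ∈ ℝ^{n×Hm}`. -/
def PH {n m : ℕ} (H : ℕ) (A : Matrix (Fin n) (Fin n) ℝ) (B : Matrix (Fin n) (Fin m) ℝ) :
    Matrix (Fin n) (Fin H × Fin m) ℝ :=
  Matrix.of fun i q => (A ^ (H - 1 - (q.1 : ℕ)) * B) i q.2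

/-! ### Auxiliary lemmas about `evnorm` -/

lemma evnorm_nonneg {ι : Type*} [Fintype ι] (v : ι → ℝ) : 0 ≤ evnorm v := Real.sqrt_nonneg _

lemma evnorm_sq {ι : Type*} [Fintype ι] (v : ι → ℝ) : evnorm v ^ 2 = ∑ i, v i ^ 2 :=
  Real.sq_sqrt (Finset.sum_nonneg fun i _ => sq_nonneg _)

lemma evnorm_eq_norm {ι : Type*} [Fintype ι] (v : ι → ℝ) :
    evnorm v = ‖(WithLp.equiv 2 (ι → ℝ)).symm v‖ := by
  rw [EuclideanSpace.norm_eq]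
  simp [evnorm, Real.norm_eq_abs, sq_abs]

lemma evnorm_pos {ι : Type*} [Fintype ι] {v : ι → ℝ} (hv : v ≠ 0) : 0 < evnorm v := by
  rw [evnorm_eq_norm]
  simpa using hv

lemma evnorm_smul {ι : Type*} [Fintype ι] (c : ℝ) (v : ι → ℝ) :
    evnorm (c • v) = |c| * evnorm v := by
  unfold evnorm
  simp only [Pi.smul_apply, smul_eq_mul, mul_pow]
  rw [← Finset.mul_sum, Real.sqrt_mul (sq_nonneg c), Real.sqrt_sq_eq_abs]

lemma evnorm_mulVec_le {α β : Type*} [Fintype α] [Fintype β] [DecidableEq β]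
    (A : Matrix α β ℝ) (w : β → ℝ) :
    evnorm (A *ᵥ w) ≤ ‖A‖ * evnorm w := by
  rw [evnorm_eq_norm, evnorm_eq_norm]
  exact A.l2_opNorm_mulVec ((WithLp.equiv 2 (β → ℝ)).symm w)

lemma opNorm_le_of_evnorm {α β : Type*} [Fintype α] [Fintype β] [DecidableEq β]
    (A : Matrix α β ℝ) {c : ℝ}
    (hc : 0 ≤ c) (h : ∀ w, evnorm (A *ᵥ w) ≤ c * evnorm w) : ‖A‖ ≤ c := by
  rw [Matrix.l2_opNorm_def]
  refine ContinuousLinearMap.opNorm_le_bound _ hc fun x => ?_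
  have := h ((WithLp.equiv 2 (β → ℝ)) x)
  rw [evnorm_eq_norm, evnorm_eq_norm] at this
  simpa [Matrix.toEuclideanLin_apply] using this

/-- Cauchy–Schwarz for the dot product. -/
lemma dotProduct_le_evnorm {ι : Type*} [Fintype ι] (y u : ι → ℝ) :
    y ⬝ᵥ u ≤ evnorm y * evnorm u := by
  have h2 : (∑ i, y i * u i) ^ 2 ≤ (∑ i, y i ^ 2) * (∑ i, u i ^ 2) :=
    Finset.sum_mul_sq_le_sq_mul_sq Finset.univ y u
  calc y ⬝ᵥ u ≤ |∑ i, y i * u i| := le_abs_self _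
    _ = Real.sqrt ((∑ i, y i * u i) ^ 2) := (Real.sqrt_sq_eq_abs _).symm
    _ ≤ Real.sqrt ((∑ i, y i ^ 2) * (∑ i, u i ^ 2)) := Real.sqrt_le_sqrt h2
    _ = evnorm y * evnorm u := by
        rw [Real.sqrt_mul (Finset.sum_nonneg fun i _ => sq_nonneg _)]; rfl

/-! ### Auxiliary lemmas about `sigmaMin` -/

lemma sigmaMin_nonneg {α : Type*} [Fintype α] {q : ℕ} (X : Matrix α (Fin q) ℝ) :
    0 ≤ sigmaMin X :=
  Real.iInf_nonneg fun _ => evnorm_nonneg _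

lemma sigmaMin_mul_le {α : Type*} [Fintype α] {q : ℕ} (X : Matrix α (Fin q) ℝ) (v : Fin q → ℝ) :
    sigmaMin X * evnorm v ≤ evnorm (X *ᵥ v) := by
  rcases eq_or_ne v 0 with rfl | hv
  · simp [evnorm, Matrix.mulVec_zero]
  · have hpos : 0 < evnorm v := evnorm_pos hv
    have hz : evnorm ((evnorm v)⁻¹ • v) = 1 := by
      rw [evnorm_smul, abs_of_pos (inv_pos.mpr hpos)]
      field_simp
    have hbdd : BddBelow (Set.range fun z : {z : Fin q → ℝ // evnorm z = 1} =>
        evnorm (X *ᵥ (z : Fin q → ℝ))) := ⟨0, by rintro x ⟨z, rfl⟩; exact evnorm_nonneg _⟩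
    have h1 := ciInf_le hbdd (⟨(evnorm v)⁻¹ • v, hz⟩ : {z : Fin q → ℝ // evnorm z = 1})
    simp only [Matrix.mulVec_smul] at h1
    rw [evnorm_smul, abs_of_pos (inv_pos.mpr hpos)] at h1
    have h2 := mul_le_mul_of_nonneg_right h1 hpos.le
    calc sigmaMin X * evnorm v ≤ (evnorm v)⁻¹ * evnorm (X *ᵥ v) * evnorm v := h2
      _ = evnorm (X *ᵥ v) := by field_simp

/-! ### Block lemmas -/

lemma kron_one_mulVec {H m : ℕ} (D : Matrix (Fin m) (Fin m) ℝ) (w : Fin H × Fin m → ℝ)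
    (p : Fin H × Fin m) :
    (((1 : Matrix (Fin H) (Fin H) ℝ) ⊗ₖ D) *ᵥ w) p = (D *ᵥ fun j => w (p.1, j)) p.2 := by
  obtain ⟨h, i⟩ := p
  simp only [Matrix.mulVec, dotProduct, Fintype.sum_prod_type,
    Matrix.kroneckerMap_apply, Matrix.one_apply, ite_mul, one_mul, zero_mul]
  have hsw : ∀ h' : Fin H, (∑ j, if h = h' then D i j * w (h', j) else 0)
      = if h = h' then ∑ j, D i j * w (h', j) else 0 := fun h' => by split <;> simp
  simp [hsw, Finset.sum_ite_eq]

lemma sigmaMin_kron_le {H m : ℕ} (D : Matrix (Fin m) (Fin m) ℝ) (w : Fin H × Fin m → ℝ) :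
    sigmaMin D * evnorm w ≤ evnorm (((1 : Matrix (Fin H) (Fin H) ℝ) ⊗ₖ D) *ᵥ w) := by
  have hσ := sigmaMin_nonneg D
  have hsq : (sigmaMin D * evnorm w) ^ 2
      ≤ evnorm (((1 : Matrix (Fin H) (Fin H) ℝ) ⊗ₖ D) *ᵥ w) ^ 2 := by
    rw [mul_pow, evnorm_sq, evnorm_sq, Fintype.sum_prod_type, Fintype.sum_prod_type,
      Finset.mul_sum]
    refine Finset.sum_le_sum fun h _ => ?_
    have hk := sigmaMin_mul_le D (fun j => w (h, j))
    have hk2 := pow_le_pow_left₀ (mul_nonneg hσ (evnorm_nonneg _)) hk 2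
    rw [mul_pow, evnorm_sq, evnorm_sq] at hk2
    calc sigmaMin D ^ 2 * ∑ i, w (h, i) ^ 2
        ≤ ∑ i, (D *ᵥ fun j => w (h, j)) i ^ 2 := hk2
      _ = ∑ i, ((((1 : Matrix (Fin H) (Fin H) ℝ) ⊗ₖ D) *ᵥ w) (h, i)) ^ 2 := by
          simp only [kron_one_mulVec]
  exact le_of_pow_le_pow_left₀ two_ne_zero (evnorm_nonneg _) hsq

lemma evnorm_fromRows_le {α β γ : Type*} [Fintype α] [Fintype β] [Fintype γ]
    (X : Matrix α γ ℝ) (Y : Matrix β γ ℝ) (v : γ → ℝ) :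
    evnorm (Y *ᵥ v) ≤ evnorm (Matrix.fromRows X Y *ᵥ v) := by
  unfold evnorm
  apply Real.sqrt_le_sqrt
  rw [Matrix.fromRows_mulVec, Fintype.sum_sum_type]
  simp only [Sum.elim_inl, Sum.elim_inr]
  exact le_add_of_nonneg_left (Finset.sum_nonneg fun i _ => sq_nonneg _)

/-- An orthogonal projection is a contraction. -/
lemma evnorm_proj_mulVec_le {α : Type*} [Fintype α] (Q : Matrix α α ℝ)
    (hQQ : Q * Q = Q) (hQt : Qᵀ = Q) (y : α → ℝ) :
    evnorm (Q *ᵥ y) ≤ evnorm y := by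
  have key : evnorm (Q *ᵥ y) ^ 2 ≤ evnorm y * evnorm (Q *ᵥ y) := by
    rw [evnorm_sq]
    have h1 : ∑ i, (Q *ᵥ y) i ^ 2 = (Q *ᵥ y) ⬝ᵥ (Q *ᵥ y) := by
      simp [dotProduct, sq]
    have h2 : (Q *ᵥ y) ⬝ᵥ (Q *ᵥ y) = y ⬝ᵥ (Q *ᵥ y) := by
      nth_rewrite 1 [show Q *ᵥ y = y ᵥ* Q from by rw [← hQt, Matrix.mulVec_transpose, hQt]]
      rw [← Matrix.dotProduct_mulVec, Matrix.mulVec_mulVec, hQQ]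
    rw [h1, h2]
    exact dotProduct_le_evnorm y (Q *ᵥ y)
  rcases eq_or_lt_of_le (evnorm_nonneg (Q *ᵥ y)) with h0 | h0
  · rw [← h0]; exact evnorm_nonneg y
  · nlinarith [key]

/-- Let `P_H(A,B)` have full row rank `n`, let `C`, `D` be symmetric positive definite, and let
`F = [𝐂·G_u(A,B); 𝐃]·(I − P_H⁺ P_H)` with `𝐂 = I_H ⊗ C`, `𝐃 = I_H ⊗ D`.
Then `‖F⁺‖₂ ≤ 1/σ_min(D)`. -/
theorem F_pinv_opNorm_le
    {n m : ℕ} (H : ℕ) (hH : 1 ≤ H)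
    (A : Matrix (Fin n) (Fin n) ℝ) (B : Matrix (Fin n) (Fin m) ℝ)
    (C : Matrix (Fin n) (Fin n) ℝ) (D : Matrix (Fin m) (Fin m) ℝ)
    (hC : C.PosDef) (hD : D.PosDef)
    (hrank : (PH H A B).rank = n)
    (Pp : Matrix (Fin H × Fin m) (Fin n) ℝ) (hPp : IsMoorePenrose (PH H A B) Pp)
    (F : Matrix ((Fin H × Fin n) ⊕ (Fin H × Fin m)) (Fin H × Fin m) ℝ)
    (hF : F = Matrix.fromRows (((1 : Matrix (Fin H) (Fin H) ℝ) ⊗ₖ C) * Gu H A B)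
        ((1 : Matrix (Fin H) (Fin H) ℝ) ⊗ₖ D) * (1 - Pp * PH H A B))
    (Fp : Matrix (Fin H × Fin m) ((Fin H × Fin n) ⊕ (Fin H × Fin m)) ℝ)
    (hFp : IsMoorePenrose F Fp) :
    ‖Fp‖ ≤ 1 / sigmaMin D := by
  rcases Nat.eq_zero_or_pos m with rfl | hm
  · -- degenerate case: no columns
    have hFp0 : Fp = 0 := by
      ext i j
      exact i.2.elim0
    rw [hFp0, norm_zero]
    exact div_nonneg zero_le_one (sigmaMin_nonneg D)
  -- notation
  set P : Matrix (Fin n) (Fin H × Fin m) ℝ := PH H A B with hP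
  set Prj : Matrix (Fin H × Fin m) (Fin H × Fin m) ℝ := 1 - Pp * P with hPrj
  set M : Matrix ((Fin H × Fin n) ⊕ (Fin H × Fin m)) (Fin H × Fin m) ℝ :=
    Matrix.fromRows (((1 : Matrix (Fin H) (Fin H) ℝ) ⊗ₖ C) * Gu H A B)
      ((1 : Matrix (Fin H) (Fin H) ℝ) ⊗ₖ D) with hM
  have hFMP : F = M * Prj := hF
  -- Prj is a symmetric idempotent
  have hPrjt : Prjᵀ = Prj := by
    rw [hPrj, Matrix.transpose_sub, Matrix.transpose_one, hPp.2.2.2]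
  have hPrjPrj : Prj * Prj = Prj := by
    have hXX : (Pp * P) * (Pp * P) = Pp * P := by
      rw [← Matrix.mul_assoc, hPp.2.1]
    rw [hPrj]
    calc (1 - Pp * P) * (1 - Pp * P)
        = 1 - Pp * P - ((Pp * P) - (Pp * P) * (Pp * P)) := by noncomm_ring
      _ = 1 - Pp * P := by rw [hXX]; simp
  -- Prj ∘ Fp = Fp
  have hFpFt : Fp = Fᵀ * (Fpᵀ * Fp) := by
    conv_lhs => rw [← hFp.2.1]
    rw [← hFp.2.2.2, Matrix.transpose_mul, Matrix.mul_assoc]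
  have hPrjFt : Prj * Fᵀ = Fᵀ := by
    rw [hFMP, Matrix.transpose_mul, hPrjt, ← Matrix.mul_assoc, hPrjPrj]
  have hPrjFp : Prj * Fp = Fp := by
    rw [hFpFt, ← Matrix.mul_assoc, hPrjFt]
  -- F * Fp is a symmetric idempotent
  have hQQ : (F * Fp) * (F * Fp) = F * Fp := by
    rw [← Matrix.mul_assoc, hFp.1]
  have hQt : (F * Fp)ᵀ = F * Fp := hFp.2.2.1
  -- positivity of sigmaMin D
  have hDdet : IsUnit D.det := isUnit_iff_ne_zero.mpr hD.det_pos.ne'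
  have hDinv : D⁻¹ * D = 1 := Matrix.nonsing_inv_mul D hDdet
  have hunit : ∀ z : Fin m → ℝ, evnorm z = 1 → 1 ≤ ‖D⁻¹‖ * evnorm (D *ᵥ z) := by
    intro z hz
    calc (1 : ℝ) = evnorm z := hz.symm
      _ = evnorm (D⁻¹ *ᵥ (D *ᵥ z)) := by rw [Matrix.mulVec_mulVec, hDinv, Matrix.one_mulVec]
      _ ≤ ‖D⁻¹‖ * evnorm (D *ᵥ z) := evnorm_mulVec_le _ _
  -- a unit vector exists since m > 0
  have hz1 : evnorm (fun i : Fin m => if i = ⟨0, hm⟩ then (1 : ℝ) else 0) = 1 := by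
    unfold evnorm
    have hs : (∑ i : Fin m, (if i = ⟨0, hm⟩ then (1 : ℝ) else 0) ^ 2) = 1 := by
      simp [ite_pow, Finset.sum_ite_eq']
    rw [hs, Real.sqrt_one]
  have hDinvnorm : 0 < ‖D⁻¹‖ := by
    by_contra hcon
    push_neg at hcon
    have h1 := hunit _ hz1
    nlinarith [evnorm_nonneg (D *ᵥ fun i : Fin m => if i = ⟨0, hm⟩ then (1 : ℝ) else 0),
      norm_nonneg (D⁻¹ : Matrix (Fin m) (Fin m) ℝ)]
  have hσpos : 0 < sigmaMin D := by
    have hlb : (‖D⁻¹‖)⁻¹ ≤ sigmaMin D := by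
      have : Nonempty {z : Fin m → ℝ // evnorm z = 1} := ⟨⟨_, hz1⟩⟩
      refine le_ciInf fun z => ?_
      have h1 := hunit z z.2
      rw [mul_comm] at h1
      rw [inv_eq_one_div, div_le_iff₀ hDinvnorm]
      exact h1
    exact lt_of_lt_of_le (inv_pos.mpr hDinvnorm) hlb
  -- the key bound
  have hkey : ∀ y, evnorm (Fp *ᵥ y) ≤ (1 / sigmaMin D) * evnorm y := by
    intro y
    set x : Fin H × Fin m → ℝ := Fp *ᵥ y with hx
    have hPrjx : Prj *ᵥ x = x := by
      rw [hx, Matrix.mulVec_mulVec, hPrjFp]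
    have hchain : sigmaMin D * evnorm x ≤ evnorm y := by
      calc sigmaMin D * evnorm x
          ≤ evnorm (((1 : Matrix (Fin H) (Fin H) ℝ) ⊗ₖ D) *ᵥ x) := sigmaMin_kron_le D x
        _ ≤ evnorm (M *ᵥ x) := by rw [hM]; exact evnorm_fromRows_le _ _ x
        _ = evnorm (F *ᵥ x) := by
            rw [hFMP, ← Matrix.mulVec_mulVec, hPrjx]
        _ = evnorm ((F * Fp) *ᵥ y) := by rw [hx, Matrix.mulVec_mulVec]
        _ ≤ evnorm y := evnorm_proj_mulVec_le _ hQQ hQt y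
    rw [div_mul_eq_mul_div, one_mul, le_div_iff₀ hσpos, mul_comm]
    exact hchain
  exact opNorm_le_of_evnorm Fp (div_nonneg zero_le_one hσpos.le) hkey
end

section
/- Let F₁, F₂ ∈ ℝ^{p×q} be matrices and g₁, g₂ ∈ ℝ^p vectors, and define ν_i = (F_i F_i⁺ − I)·g_i for i = 1, 2. Then ‖ν₁ − ν₂‖₂ ≤ ‖g₁ − g₂‖₂ + ‖F₁ − F₂‖₂·(‖F₁⁺‖₂ + ‖F₂⁺‖₂)·‖g₂‖₂. -/
open Matrix
open scoped Matrix.Norms.L2Operator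

lemma conjT_real {m n : Type*} [Fintype m] [Fintype n] (A : Matrix m n ℝ) : Aᴴ = Aᵀ := by
  ext i j; simp [conjTranspose_apply]

lemma transpose_l2norm {m n : Type*} [Fintype m] [Fintype n] [DecidableEq m] [DecidableEq n]
    (A : Matrix m n ℝ) : ‖Aᵀ‖ = ‖A‖ := by
  rw [← conjT_real, l2_opNorm_conjTranspose]

lemma proj_sub_one_norm_le {m : Type*} [Fintype m] [DecidableEq m] (P : Matrix m m ℝ)
    (hidem : P * P = P) (hsym : Pᵀ = P) : ‖P - 1‖ ≤ 1 := by
  have hsq : (P - 1) * (P - 1) = -(P - 1) := by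
    have h : (P - 1) * (P - 1) = P * P - P - P + 1 := by noncomm_ring
    rw [hidem] at h; rw [h]; abel
  have hct : (P - 1)ᴴ = P - 1 := by
    rw [conjT_real, transpose_sub, transpose_one, hsym]
  have h := l2_opNorm_conjTranspose_mul_self (P - 1)
  rw [hct, hsq, norm_neg] at h
  nlinarith [norm_nonneg (P - 1)]

lemma evnorm_eq' {ι : Type*} [Fintype ι] (v : ι → ℝ) :
    evnorm v = ‖(EuclideanSpace.equiv ι ℝ).symm v‖ := by
  rw [evnorm, EuclideanSpace.norm_eq]
  simp [Real.norm_eq_abs, sq_abs]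

theorem nu_aux
    {p q : ℕ} (F₁ F₂ : Matrix (Fin p) (Fin q) ℝ) (Fp₁ Fp₂ : Matrix (Fin q) (Fin p) ℝ)
    (h1a : F₁ * Fp₁ * F₁ = F₁) (h1c : (F₁ * Fp₁)ᵀ = F₁ * Fp₁)
    (h2a : F₂ * Fp₂ * F₂ = F₂) (h2c : (F₂ * Fp₂)ᵀ = F₂ * Fp₂)
    (g₁ g₂ : Fin p → ℝ) :
    evnorm ((F₁ * Fp₁ - 1).mulVec g₁ - (F₂ * Fp₂ - 1).mulVec g₂) ≤
      evnorm (g₁ - g₂) + ‖F₁ - F₂‖ * (‖Fp₁‖ + ‖Fp₂‖) * evnorm g₂ := by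
  set P₁ := F₁ * Fp₁ with hP₁
  set P₂ := F₂ * Fp₂ with hP₂
  -- idempotence
  have hidem₁ : P₁ * P₁ = P₁ := by
    nth_rewrite 2 [hP₁]
    rw [← Matrix.mul_assoc, h1a, ← hP₁]
  have hidem₂ : P₂ * P₂ = P₂ := by
    nth_rewrite 2 [hP₂]
    rw [← Matrix.mul_assoc, h2a, ← hP₂]
  -- projection norm bounds
  have hn₁ : ‖P₁ - 1‖ ≤ 1 := proj_sub_one_norm_le P₁ hidem₁ h1c
  have hn₂' : ‖(1 : Matrix (Fin p) (Fin p) ℝ) - P₂‖ ≤ 1 := by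
    rw [show (1 : Matrix (Fin p) (Fin p) ℝ) - P₂ = -(P₂ - 1) by abel, norm_neg]
    exact proj_sub_one_norm_le P₂ hidem₂ h2c
  have hn₁' : ‖(1 : Matrix (Fin p) (Fin p) ℝ) - P₁‖ ≤ 1 := by
    rw [show (1 : Matrix (Fin p) (Fin p) ℝ) - P₁ = -(P₁ - 1) by abel, norm_neg]
    exact hn₁
  -- key factorizations
  have hF2T : F₂ᵀ * (1 - P₂) = 0 := by
    have hFP : F₂ᵀ * P₂ = F₂ᵀ := by rw [← h2c, ← transpose_mul, h2a]
    rw [Matrix.mul_sub, Matrix.mul_one, hFP, sub_self]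
  have hfac₁ : P₁ * (1 - P₂) = Fp₁ᵀ * ((F₁ - F₂)ᵀ * (1 - P₂)) := by
    rw [transpose_sub, Matrix.sub_mul, hF2T, sub_zero, ← Matrix.mul_assoc, ← transpose_mul,
      ← hP₁, h1c]
  have hF1 : (1 - P₁) * F₁ = 0 := by
    rw [Matrix.sub_mul, Matrix.one_mul, h1a, sub_self]
  have hfac₂ : (1 - P₁) * P₂ = (1 - P₁) * ((F₂ - F₁) * Fp₂) := by
    rw [Matrix.sub_mul F₂ F₁ Fp₂, Matrix.mul_sub, ← Matrix.mul_assoc (1 - P₁) F₁ Fp₂, hF1,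
      Matrix.zero_mul, sub_zero, ← hP₂]
  -- bound on ‖P₁ - P₂‖
  have hb₁ : ‖P₁ * (1 - P₂)‖ ≤ ‖F₁ - F₂‖ * ‖Fp₁‖ := by
    rw [hfac₁]
    calc ‖Fp₁ᵀ * ((F₁ - F₂)ᵀ * (1 - P₂))‖ ≤ ‖Fp₁ᵀ‖ * ‖(F₁ - F₂)ᵀ * (1 - P₂)‖ :=
          l2_opNorm_mul _ _
      _ ≤ ‖Fp₁ᵀ‖ * (‖(F₁ - F₂)ᵀ‖ * ‖1 - P₂‖) :=
          mul_le_mul_of_nonneg_left (l2_opNorm_mul _ _) (norm_nonneg _)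
      _ ≤ ‖Fp₁‖ * (‖F₁ - F₂‖ * 1) := by
          rw [transpose_l2norm, transpose_l2norm]
          exact mul_le_mul_of_nonneg_left
            (mul_le_mul_of_nonneg_left hn₂' (norm_nonneg _)) (norm_nonneg _)
      _ = ‖F₁ - F₂‖ * ‖Fp₁‖ := by ring
  have hb₂ : ‖(1 - P₁) * P₂‖ ≤ ‖F₁ - F₂‖ * ‖Fp₂‖ := by
    rw [hfac₂]
    calc ‖(1 - P₁) * ((F₂ - F₁) * Fp₂)‖ ≤ ‖(1 - P₁)‖ * ‖(F₂ - F₁) * Fp₂‖ := l2_opNorm_mul _ _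
      _ ≤ 1 * (‖F₂ - F₁‖ * ‖Fp₂‖) :=
          mul_le_mul hn₁' (l2_opNorm_mul _ _) (norm_nonneg _) zero_le_one
      _ = ‖F₁ - F₂‖ * ‖Fp₂‖ := by rw [norm_sub_rev]; ring
  have hPP : ‖P₁ - P₂‖ ≤ ‖F₁ - F₂‖ * (‖Fp₁‖ + ‖Fp₂‖) := by
    have hdiff : P₁ - P₂ = P₁ * (1 - P₂) - (1 - P₁) * P₂ := by noncomm_ring
    rw [hdiff]
    calc ‖P₁ * (1 - P₂) - (1 - P₁) * P₂‖ ≤ ‖P₁ * (1 - P₂)‖ + ‖(1 - P₁) * P₂‖ := norm_sub_le _ _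
      _ ≤ ‖F₁ - F₂‖ * ‖Fp₁‖ + ‖F₁ - F₂‖ * ‖Fp₂‖ := add_le_add hb₁ hb₂
      _ = ‖F₁ - F₂‖ * (‖Fp₁‖ + ‖Fp₂‖) := by ring
  -- vector decomposition
  have hv : (P₁ - 1).mulVec g₁ - (P₂ - 1).mulVec g₂ =
      (P₁ - 1).mulVec (g₁ - g₂) + (P₁ - P₂).mulVec g₂ := by
    rw [mulVec_sub, sub_mulVec, sub_mulVec, sub_mulVec, sub_mulVec]
    abel
  rw [hv, evnorm_eq', evnorm_eq', evnorm_eq']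
  have b1 : ‖(EuclideanSpace.equiv (Fin p) ℝ).symm ((P₁ - 1).mulVec (g₁ - g₂))‖ ≤
      ‖P₁ - 1‖ * ‖(EuclideanSpace.equiv (Fin p) ℝ).symm (g₁ - g₂)‖ :=
    l2_opNorm_mulVec (P₁ - 1) ((EuclideanSpace.equiv (Fin p) ℝ).symm (g₁ - g₂))
  have b2 : ‖(EuclideanSpace.equiv (Fin p) ℝ).symm ((P₁ - P₂).mulVec g₂)‖ ≤
      ‖P₁ - P₂‖ * ‖(EuclideanSpace.equiv (Fin p) ℝ).symm g₂‖ :=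
    l2_opNorm_mulVec (P₁ - P₂) ((EuclideanSpace.equiv (Fin p) ℝ).symm g₂)
  calc ‖(EuclideanSpace.equiv (Fin p) ℝ).symm ((P₁ - 1).mulVec (g₁ - g₂) + (P₁ - P₂).mulVec g₂)‖
      ≤ ‖(EuclideanSpace.equiv (Fin p) ℝ).symm ((P₁ - 1).mulVec (g₁ - g₂))‖ +
        ‖(EuclideanSpace.equiv (Fin p) ℝ).symm ((P₁ - P₂).mulVec g₂)‖ := by
        rw [map_add]; exact norm_add_le _ _
    _ ≤ ‖P₁ - 1‖ * ‖(EuclideanSpace.equiv (Fin p) ℝ).symm (g₁ - g₂)‖ +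
        ‖P₁ - P₂‖ * ‖(EuclideanSpace.equiv (Fin p) ℝ).symm g₂‖ := add_le_add b1 b2
    _ ≤ 1 * ‖(EuclideanSpace.equiv (Fin p) ℝ).symm (g₁ - g₂)‖ +
        (‖F₁ - F₂‖ * (‖Fp₁‖ + ‖Fp₂‖)) * ‖(EuclideanSpace.equiv (Fin p) ℝ).symm g₂‖ :=
        add_le_add (mul_le_mul_of_nonneg_right hn₁ (norm_nonneg _))
          (mul_le_mul_of_nonneg_right hPP (norm_nonneg _))
    _ = ‖(EuclideanSpace.equiv (Fin p) ℝ).symm (g₁ - g₂)‖ +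
        ‖F₁ - F₂‖ * (‖Fp₁‖ + ‖Fp₂‖) * ‖(EuclideanSpace.equiv (Fin p) ℝ).symm g₂‖ := by ring


/-- Let `F₁, F₂ ∈ ℝ^{p×q}`, `g₁, g₂ ∈ ℝ^p`, and `ν_i = (F_i F_i⁺ − I) g_i`.  Then
`‖ν₁ − ν₂‖₂ ≤ ‖g₁ − g₂‖₂ + ‖F₁ − F₂‖₂ (‖F₁⁺‖₂ + ‖F₂⁺‖₂) ‖g₂‖₂`. -/
theorem nu_diff_norm_bound
    {p q : ℕ} (F₁ F₂ : Matrix (Fin p) (Fin q) ℝ) (Fp₁ Fp₂ : Matrix (Fin q) (Fin p) ℝ)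
    (h₁ : IsMoorePenrose F₁ Fp₁) (h₂ : IsMoorePenrose F₂ Fp₂)
    (g₁ g₂ : Fin p → ℝ) :
    evnorm ((F₁ * Fp₁ - 1).mulVec g₁ - (F₂ * Fp₂ - 1).mulVec g₂) ≤
      evnorm (g₁ - g₂) + ‖F₁ - F₂‖ * (‖Fp₁‖ + ‖Fp₂‖) * evnorm g₂ := by
  obtain ⟨h1a, -, h1c, -⟩ := h₁
  obtain ⟨h2a, -, h2c, -⟩ := h₂
  exact nu_aux F₁ F₂ Fp₁ Fp₂ h1a h1c h2a h2c g₁ g₂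
end
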